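/- If G is a square graph and H is any graph with at least one vertex, then the tensor (direct) product G × H is a square. -/

import Mathlib

open SimpleGraph

/-- Butterfly involution data: `φ` is an involutive automorphism of `G`, with nonempty
fixed set and nonempty non-fixed set, the common-neighbor condition, and a partition
`A0 ∪ A1` of the non-fixed vertices with no crossing edges, swapped by `φ`. -/
def ButterflyData {V : Type*} (G : SimpleGraph V) (phi : G ≃g G) (A0 A1 : Set V) : Prop :=
  Function.Involutive phi ∧
  (∃ v, phi v = v) ∧ (∃ v, phi v ≠ v) ∧
  (∀ u : V, phi u ≠ u →
    G.neighborSet u ∩ G.neighborSet (phi u) = G.neighborSet u ∩ {v | phi v = v}) ∧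
  A0 ∪ A1 = {v | phi v ≠ v} ∧ Disjoint A0 A1 ∧
  (∀ a ∈ A0, ∀ b ∈ A1, ¬ G.Adj a b) ∧
  (∀ a ∈ A0, phi a ∈ A1) ∧ (∀ a ∈ A1, phi a ∈ A0)

/-- A graph is a square (in the gluing algebra) iff it admits a butterfly involution. -/
def IsSquareGraph {V : Type*} (G : SimpleGraph V) : Prop :=
  ∃ (phi : G ≃g G) (A0 A1 : Set V), ButterflyData G phi A0 A1

/-- The tensor (direct) product of two graphs. -/
def tensorProd {α β : Type*} (G : SimpleGraph α) (H : SimpleGraph β) :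
    SimpleGraph (α × β) where
  Adj x y := G.Adj x.1 y.1 ∧ H.Adj x.2 y.2
  symm := ⟨fun _ _ h => ⟨h.1.symm, h.2.symm⟩⟩
  loopless := ⟨fun x h => G.irrefl h.1⟩

theorem stmt16 {α β : Type*} [Fintype α] [Fintype β] (G : SimpleGraph α)
    (H : SimpleGraph β) (hG : IsSquareGraph G) (hβ : Nonempty β) :
    IsSquareGraph (tensorProd G H) := by
  obtain ⟨phi, A0, A1, hinv, ⟨v0, hv0⟩, ⟨v1, hv1⟩, hnbr, hcover, hdisj, hcross, h01, h10⟩ := hG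
  obtain ⟨b⟩ := hβ
  refine ⟨⟨Equiv.prodCongr phi.toEquiv (Equiv.refl β), ?_⟩, A0 ×ˢ (Set.univ : Set β),
    A1 ×ˢ (Set.univ : Set β), ?_, ⟨(v0, b), ?_⟩, ⟨(v1, b), ?_⟩, ?_, ?_, ?_, ?_, ?_, ?_⟩
  · intro x y
    simp only [Equiv.prodCongr_apply, Equiv.coe_refl, Prod.map]
    show G.Adj (phi x.1) (phi y.1) ∧ H.Adj x.2 y.2 ↔ G.Adj x.1 y.1 ∧ H.Adj x.2 y.2
    exact and_congr phi.map_rel_iff Iff.rfl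
  · intro ⟨g, h⟩
    simp [hinv g]
  · simp [hv0]
  · simp [Prod.ext_iff, hv1]
  · intro ⟨g, h⟩ hu
    have hg : phi g ≠ g := by
      intro hgg; apply hu; simp [Prod.ext_iff, hgg]
    ext ⟨g', h'⟩
    have := Set.ext_iff.mp (hnbr g hg) g'
    simp only [mem_neighborSet, Set.mem_inter_iff, Set.mem_setOf_eq] at this ⊢
    simp only [tensorProd, Prod.ext_iff]
    constructor
    · rintro ⟨⟨a1, a2⟩, ⟨b1, _⟩⟩
      exact ⟨⟨a1, a2⟩, (this.mp ⟨a1, b1⟩).2, rfl⟩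
    · rintro ⟨⟨a1, a2⟩, hfix, _⟩
      exact ⟨⟨a1, a2⟩, (this.mpr ⟨a1, hfix⟩).2, a2⟩
  · ext ⟨g, h⟩
    have := Set.ext_iff.mp hcover g
    simp only [Set.mem_union, Set.mem_prod, Set.mem_univ, and_true, Set.mem_setOf_eq] at this ⊢
    simp [Prod.ext_iff, this]
  · rw [Set.disjoint_left]
    rintro ⟨g, h⟩ ⟨hg, -⟩ ⟨hg', -⟩
    exact Set.disjoint_left.mp hdisj hg hg'
  · rintro ⟨g, h⟩ ⟨hg, -⟩ ⟨g', h'⟩ ⟨hg', -⟩ hadj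
    exact hcross g hg g' hg' (show G.Adj g g' ∧ H.Adj h h' from hadj).1
  · rintro ⟨g, h⟩ ⟨hg, -⟩
    exact ⟨h01 g hg, trivial⟩
  · rintro ⟨g, h⟩ ⟨hg, -⟩
    exact ⟨h10 g hg, trivial⟩
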